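/- Let Γ be a finite k-regular graph, neither complete nor null, with clique number equal to chromatic number and primitive automorphism group. Let A be a set of vertices of size at least 3 such that the union N_A of the neighbourhoods of the members of A has size at most k+2. Then for any two distinct x, y ∈ A: |N(x) ∩ N(y)| = k−2, N(x) ∪ N(y) = N_A, and every vertex w ∈ N_A is adjacent to at least |A|−1 elements of A. -/

import Mathlib

open Finset

def IsPrimitivePermGroup {X : Type*} (G : Subgroup (Equiv.Perm X)) : Prop :=
  (∀ x y : X, ∃ g ∈ G, g x = y) ∧
  ∀ R : X → X → Prop, Equivalence R →
    (∀ g ∈ G, ∀ x y : X, R x y → R (g x) (g y)) →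
    (∀ x y : X, R x y ↔ x = y) ∨ (∀ x y : X, R x y)

/-- Key lemma: in a finite regular graph with clique number = chromatic number,
primitive automorphism group, an edge and a non-edge, no two distinct vertices
have `|N(x) \ N(y)| ≤ 1`. -/
lemma key_no_near {X : Type*} [Fintype X] [DecidableEq X] (Γ : SimpleGraph X)
    [DecidableRel Γ.Adj] (k : ℕ)
    (G : Subgroup (Equiv.Perm X))
    (hAut : ∀ g ∈ G, ∀ x y : X, Γ.Adj x y ↔ Γ.Adj (g x) (g y))
    (hPrim : IsPrimitivePermGroup G)
    (hchrom : Γ.chromaticNumber = (Γ.cliqueNum : ℕ∞))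
    (hEdge : ∃ x y : X, Γ.Adj x y)
    (hNonComplete : ∃ x y : X, x ≠ y ∧ ¬ Γ.Adj x y)
    {x y : X} (hxy : x ≠ y)
    (hsd : (Γ.neighborFinset x \ Γ.neighborFinset y).card ≤ 1) : False := by
  classical
  set r := Γ.cliqueNum with hr
  have hcolor : Γ.Colorable r :=
    (SimpleGraph.chromaticNumber_le_iff_colorable).mp (le_of_eq hchrom)
  -- image of an n-clique under a group element is an n-clique
  have himg : ∀ g ∈ G, ∀ K : Finset X, Γ.IsNClique r K → Γ.IsNClique r (K.image g) := by
    intro g hg K hK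
    constructor
    · intro a ha b hb hab
      simp only [coe_image, Set.mem_image, mem_coe] at ha hb
      obtain ⟨a₀, ha₀, rfl⟩ := ha
      obtain ⟨b₀, hb₀, rfl⟩ := hb
      have hab₀ : a₀ ≠ b₀ := by rintro rfl; exact hab rfl
      exact (hAut g hg a₀ b₀).mp (hK.isClique (mem_coe.mpr ha₀) (mem_coe.mpr hb₀) hab₀)
    · rw [card_image_of_injective _ (Equiv.injective g)]
      exact hK.card_eq
  -- cliques through a vertex
  set S : X → Finset (Finset X) :=
    fun u => Finset.univ.filter (fun K => Γ.IsNClique r K ∧ u ∈ K) with hS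
  have hSmem : ∀ u K, K ∈ S u ↔ Γ.IsNClique r K ∧ u ∈ K := by
    intro u K; simp [hS]
  have hSmap : ∀ g ∈ G, ∀ u, (S u).image (fun K => K.image g) = S (g u) := by
    intro g hg u
    apply Finset.Subset.antisymm
    · intro K' hK'
      rw [Finset.mem_image] at hK'
      obtain ⟨K, hK, rfl⟩ := hK'
      rw [hSmem] at hK ⊢
      exact ⟨himg g hg K hK.1, Finset.mem_image_of_mem _ hK.2⟩
    · intro K' hK'
      rw [hSmem] at hK'
      rw [Finset.mem_image]
      refine ⟨K'.image (g⁻¹ : Equiv.Perm X), ?_, ?_⟩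
      · rw [hSmem]
        refine ⟨himg _ (inv_mem hg) K' hK'.1, ?_⟩
        have : (g⁻¹ : Equiv.Perm X) (g u) ∈ K'.image (g⁻¹ : Equiv.Perm X) :=
          Finset.mem_image_of_mem _ hK'.2
        simpa using this
      · rw [Finset.image_image]
        have : ((g : Equiv.Perm X) ∘ (g⁻¹ : Equiv.Perm X)) = id := by
          funext z; simp
        rw [this, Finset.image_id]
  have hcount : ∀ u v : X, (S u).card = (S v).card := by
    intro u v
    obtain ⟨g, hg, hgu⟩ := hPrim.1 u v
    rw [← hgu, ← hSmap g hg u]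
    exact (Finset.card_image_of_injective _ (Finset.image_injective (Equiv.injective g))).symm
  -- r ≥ 1 and existence of a maximum clique through any vertex
  obtain ⟨K₀, hK₀⟩ := Γ.exists_isNClique_cliqueNum
  obtain ⟨a₁, b₁, hab₁⟩ := id hEdge
  have hr1 : 1 ≤ r := by
    have h1 : Γ.IsClique ({a₁} : Finset X) := by simp [SimpleGraph.IsClique]
    have := @SimpleGraph.IsClique.card_le_cliqueNum X Γ _ {a₁} h1
    simpa using this
  have hmem_of : ∀ u : X, ∃ K, K ∈ S u := by
    intro u
    have hne : K₀.Nonempty := by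
      rw [← Finset.card_pos, hK₀.card_eq]; omega
    obtain ⟨w₀, hw₀⟩ := hne
    obtain ⟨g, hg, hgw⟩ := hPrim.1 w₀ u
    refine ⟨K₀.image g, ?_⟩
    rw [hSmem]
    exact ⟨himg g hg K₀ hK₀, hgw ▸ Finset.mem_image_of_mem _ hw₀⟩
  by_cases hc : ∃ c : Γ.Coloring (Fin r), c x ≠ c y
  · obtain ⟨c, hcxy⟩ := hc
    -- every maximum clique through x contains an element of N(x) \ N(y)
    have hz : ∀ K ∈ S x, ∃ z ∈ K, z ∈ Γ.neighborFinset x \ Γ.neighborFinset y := by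
      intro K hK
      rw [hSmem] at hK
      obtain ⟨hKcl, hxK⟩ := hK
      have hinj : Set.InjOn c ↑K := by
        intro a ha b hb hcc
        by_contra hne
        exact c.valid (hKcl.isClique ha hb hne) hcc
      have hcard : (K.image c).card = r := by
        rw [Finset.card_image_of_injOn hinj, hKcl.card_eq]
      have huniv : K.image c = Finset.univ := by
        apply Finset.eq_univ_of_card
        rw [hcard, Fintype.card_fin]
      have hcy : c y ∈ K.image c := huniv ▸ Finset.mem_univ _
      rw [Finset.mem_image] at hcy
      obtain ⟨z, hzK, hzc⟩ := hcy
      refine ⟨z, hzK, ?_⟩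
      have hzx : z ≠ x := by
        rintro rfl; exact hcxy (hzc ▸ rfl)
      have hadjxz : Γ.Adj x z :=
        hKcl.isClique (mem_coe.mpr hxK) (mem_coe.mpr hzK) (Ne.symm hzx)
      rw [Finset.mem_sdiff, SimpleGraph.mem_neighborFinset, SimpleGraph.mem_neighborFinset]
      refine ⟨hadjxz, fun hadjyz => ?_⟩
      exact c.valid hadjyz.symm (hzc.symm ▸ rfl)
    -- hence N(x) \ N(y) = {w} and every maximum clique through x contains w
    obtain ⟨K₁, hK₁⟩ := hmem_of x
    obtain ⟨z₁, _, hz₁⟩ := hz K₁ hK₁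
    have hone : (Γ.neighborFinset x \ Γ.neighborFinset y).card = 1 := by
      have : 0 < (Γ.neighborFinset x \ Γ.neighborFinset y).card :=
        Finset.card_pos.mpr ⟨z₁, hz₁⟩
      omega
    obtain ⟨w, hw⟩ := Finset.card_eq_one.mp hone
    have hwmem : w ∈ Γ.neighborFinset x \ Γ.neighborFinset y := by
      rw [hw]; exact Finset.mem_singleton_self w
    have hwx : w ≠ x := by
      rw [Finset.mem_sdiff, SimpleGraph.mem_neighborFinset] at hwmem
      exact fun h => Γ.irrefl (v := x) (h ▸ hwmem.1)
    have hSxw : S x ⊆ S w := by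
      intro K hK
      obtain ⟨z, hzK, hzmem⟩ := hz K hK
      rw [hw, Finset.mem_singleton] at hzmem
      rw [hSmem] at hK ⊢
      exact ⟨hK.1, hzmem ▸ hzK⟩
    have hSeq : S x = S w :=
      Finset.eq_of_subset_of_card_le hSxw (le_of_eq (hcount w x))
    rcases hPrim.2 (fun u v => S u = S v)
        ⟨fun _ => rfl, Eq.symm, Eq.trans⟩
        (fun g hg u v huv => by
          show S (g u) = S (g v)
          rw [← hSmap g hg u, ← hSmap g hg v, huv]) with htriv | huniv
    · exact hwx ((htriv w x).mp hSeq.symm)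
    · obtain ⟨a, b, hab, hnadj⟩ := hNonComplete
      obtain ⟨K, hK⟩ := hmem_of a
      have hKb : K ∈ S b := (huniv a b) ▸ hK
      rw [hSmem] at hK hKb
      exact hnadj (hK.1.isClique (mem_coe.mpr hK.2) (mem_coe.mpr hKb.2) hab)
  · push_neg at hc
    rcases hPrim.2 (fun u v => ∀ c : Γ.Coloring (Fin r), c u = c v)
        ⟨fun _ _ => rfl, fun h c => (h c).symm, fun h h' c => (h c).trans (h' c)⟩
        (fun g hg u v huv c => by
          exact huv (SimpleGraph.Coloring.mk (fun z => c (g z))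
            (fun {a b} hab => c.valid ((hAut g hg a b).mp hab)))) with htriv | huniv
    · exact hxy ((htriv x y).mp hc)
    · obtain ⟨a, b, hab⟩ := hEdge
      have c₀ : Γ.Coloring (Fin r) := hcolor.some
      exact c₀.valid hab (huniv a b c₀)

theorem stmt6 {X : Type*} [Fintype X] [DecidableEq X] (Γ : SimpleGraph X)
    [DecidableRel Γ.Adj] (k : ℕ)
    (G : Subgroup (Equiv.Perm X))
    (hAut : ∀ g ∈ G, ∀ x y : X, Γ.Adj x y ↔ Γ.Adj (g x) (g y))
    (hPrim : IsPrimitivePermGroup G)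
    (hreg : Γ.IsRegularOfDegree k)
    (hchrom : Γ.chromaticNumber = (Γ.cliqueNum : ℕ∞))
    (hEdge : ∃ x y : X, Γ.Adj x y)
    (hNonComplete : ∃ x y : X, x ≠ y ∧ ¬ Γ.Adj x y)
    (A : Finset X) (hA : 3 ≤ A.card)
    (hNA : (A.biUnion fun a => Γ.neighborFinset a).card ≤ k + 2) :
    ∀ x ∈ A, ∀ y ∈ A, x ≠ y →
      (Γ.neighborFinset x ∩ Γ.neighborFinset y).card + 2 = k ∧
      Γ.neighborFinset x ∪ Γ.neighborFinset y = A.biUnion (fun a => Γ.neighborFinset a) ∧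
      ∀ w ∈ A.biUnion (fun a => Γ.neighborFinset a),
        A.card - 1 ≤ (Γ.neighborFinset w ∩ A).card := by
  classical
  have key : ∀ a ∈ A, ∀ b ∈ A, a ≠ b →
      (Γ.neighborFinset a ∩ Γ.neighborFinset b).card + 2 = k ∧
      Γ.neighborFinset a ∪ Γ.neighborFinset b = A.biUnion (fun a => Γ.neighborFinset a) := by
    intro a ha b hb hab
    have hsub : Γ.neighborFinset a ∪ Γ.neighborFinset b ⊆
        A.biUnion (fun a => Γ.neighborFinset a) := by
      intro z hz
      rw [Finset.mem_union] at hz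
      rw [Finset.mem_biUnion]
      rcases hz with h | h
      exacts [⟨a, ha, h⟩, ⟨b, hb, h⟩]
    have hcup : (Γ.neighborFinset a ∪ Γ.neighborFinset b).card ≤ k + 2 :=
      le_trans (Finset.card_le_card hsub) hNA
    have hdega : (Γ.neighborFinset a).card = k := hreg a
    have hdegb : (Γ.neighborFinset b).card = k := hreg b
    have hids : (Γ.neighborFinset a ∪ Γ.neighborFinset b).card +
        (Γ.neighborFinset a ∩ Γ.neighborFinset b).card = k + k := by
      rw [Finset.card_union_add_card_inter, hdega, hdegb]
    have hle : (Γ.neighborFinset a ∩ Γ.neighborFinset b).card + 2 ≤ k := by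
      by_contra hlt
      push_neg at hlt
      have hsdid : (Γ.neighborFinset a \ Γ.neighborFinset b).card +
          (Γ.neighborFinset a ∩ Γ.neighborFinset b).card = k := by
        rw [Finset.card_sdiff_add_card_inter, hdega]
      have hsd : (Γ.neighborFinset a \ Γ.neighborFinset b).card ≤ 1 := by omega
      exact (key_no_near Γ k G hAut hPrim hchrom hEdge hNonComplete hab hsd).elim
    have heq : (Γ.neighborFinset a ∩ Γ.neighborFinset b).card + 2 = k := by omega
    refine ⟨heq, ?_⟩
    apply Finset.eq_of_subset_of_card_le hsub
    have : (Γ.neighborFinset a ∪ Γ.neighborFinset b).card = k + 2 := by omega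
    omega
  intro x hx y hy hxy
  refine ⟨(key x hx y hy hxy).1, (key x hx y hy hxy).2, ?_⟩
  intro w hw
  have hB : (A \ Γ.neighborFinset w).card ≤ 1 := by
    rw [Finset.card_le_one]
    intro a ha b hb
    by_contra hab
    rw [Finset.mem_sdiff] at ha hb
    have h2 := (key a ha.1 b hb.1 hab).2
    rw [← h2, Finset.mem_union] at hw
    rcases hw with h | h
    · rw [SimpleGraph.mem_neighborFinset] at h
      exact ha.2 ((SimpleGraph.mem_neighborFinset Γ w a).mpr h.symm)
    · rw [SimpleGraph.mem_neighborFinset] at h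
      exact hb.2 ((SimpleGraph.mem_neighborFinset Γ w b).mpr h.symm)
  have hsplit : (A ∩ Γ.neighborFinset w).card + (A \ Γ.neighborFinset w).card = A.card :=
    Finset.card_inter_add_card_sdiff A (Γ.neighborFinset w)
  rw [Finset.inter_comm] at hsplit
  omega
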